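/- If S_*(KG) is a subgroup of U(KG), then S_*(KG) is a normal subgroup of U(KG). -/

import Mathlib

/-- The canonical involution on the group ring `K[G]`, sending `∑ a_g g` to `∑ a_g g⁻¹`. -/
noncomputable def gstar {K G : Type*} [CommRing K] [Group G] (x : MonoidAlgebra K G) :
    MonoidAlgebra K G := .ofCoeff (Finsupp.mapDomain (fun g => g⁻¹) x.coeff)

section aux

variable {K G : Type*} [CommRing K] [Group G]

lemma gstar_add (x y : MonoidAlgebra K G) : gstar (x + y) = gstar x + gstar y :=
  congrArg MonoidAlgebra.ofCoeff Finsupp.mapDomain_add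

lemma gstar_gstar (x : MonoidAlgebra K G) : gstar (gstar x) = x := by
  unfold gstar
  rw [MonoidAlgebra.coeff_ofCoeff, ← Finsupp.mapDomain_comp]
  simp [Function.comp_def]

lemma gstar_one : gstar (1 : MonoidAlgebra K G) = 1 := by
  simp [gstar, MonoidAlgebra.one_def, MonoidAlgebra.coeff_single, Finsupp.mapDomain_single, MonoidAlgebra.ofCoeff_single]

lemma gstar_single (a : G) (b : K) :
    gstar (MonoidAlgebra.single a b) = MonoidAlgebra.single a⁻¹ b :=
  congrArg MonoidAlgebra.ofCoeff Finsupp.mapDomain_single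

lemma gstar_mul (x y : MonoidAlgebra K G) : gstar (x * y) = gstar y * gstar x := by
  induction x using MonoidAlgebra.induction_linear with
  | zero => simp [gstar]
  | add a b ha hb =>
    rw [add_mul, gstar_add, ha, hb, gstar_add, mul_add]
  | single a b =>
    induction y using MonoidAlgebra.induction_linear with
    | zero => simp [gstar]
    | add c d hc hd =>
      rw [mul_add, gstar_add, hc, hd, gstar_add, add_mul]
    | single c d =>
      rw [MonoidAlgebra.single_mul_single, gstar_single, gstar_single, gstar_single,
        MonoidAlgebra.single_mul_single, mul_inv_rev, mul_comm d b]

/-- `gstar` of a unit, as a unit. -/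
noncomputable def gstarUnit (u : (MonoidAlgebra K G)ˣ) : (MonoidAlgebra K G)ˣ where
  val := gstar (u : MonoidAlgebra K G)
  inv := gstar ((u⁻¹ : (MonoidAlgebra K G)ˣ) : MonoidAlgebra K G)
  val_inv := by rw [← gstar_mul]; simp [gstar_one]
  inv_val := by rw [← gstar_mul]; simp [gstar_one]

@[simp] lemma gstarUnit_val (u : (MonoidAlgebra K G)ˣ) :
    (gstarUnit u : MonoidAlgebra K G) = gstar (u : MonoidAlgebra K G) := rfl

@[simp] lemma gstarUnit_inv_val (u : (MonoidAlgebra K G)ˣ) :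
    (((gstarUnit u)⁻¹ : (MonoidAlgebra K G)ˣ) : MonoidAlgebra K G) =
      gstar ((u⁻¹ : (MonoidAlgebra K G)ˣ) : MonoidAlgebra K G) := rfl

end aux

/-- If the symmetric units form a subgroup, it is normal in the unit group. -/
theorem stmt_1 {K G : Type*} [CommRing K] [Group G]
    (H : Subgroup (MonoidAlgebra K G)ˣ)
    (hH : ∀ u : (MonoidAlgebra K G)ˣ, u ∈ H ↔ gstar (u : MonoidAlgebra K G) = u) :
    H.Normal := by
  constructor
  intro n hn g
  -- u := g* g is a symmetric unit
  have hu_mem : gstarUnit g * g ∈ H := by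
    rw [hH]
    push_cast
    rw [gstarUnit_val, gstar_mul, gstar_gstar]
  -- symmetric units commute: n * u = u * n
  have hnu : n * (gstarUnit g * g) ∈ H := H.mul_mem hn hu_mem
  have h2 := (hH _).mp hn
  have h3 := (hH _).mp hu_mem
  have h1 := (hH _).mp hnu
  push_cast at h3
  push_cast at h1
  rw [gstar_mul, h2, h3] at h1
  have hcommU : gstarUnit g * g * n = n * (gstarUnit g * g) :=
    Units.ext (by push_cast; exact_mod_cast h1)
  -- conclude g n g⁻¹ is symmetric
  have key : g * n * g⁻¹ = (gstarUnit g)⁻¹ * n * gstarUnit g := by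
    calc g * n * g⁻¹
        = (gstarUnit g)⁻¹ * (gstarUnit g * g * n) * g⁻¹ := by group
      _ = (gstarUnit g)⁻¹ * (n * (gstarUnit g * g)) * g⁻¹ := by rw [hcommU]
      _ = (gstarUnit g)⁻¹ * n * gstarUnit g := by group
  rw [hH]
  conv_rhs => rw [key]
  push_cast
  rw [gstar_mul, gstar_mul, h2, gstarUnit_inv_val, gstarUnit_val, mul_assoc]
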